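/- Let X be a copositive matrix with zero set T₀ = {t : t ≥ 0, ‖t‖₁ = 1, tᵀXt = 0} nonempty, and suppose every element of T₀ is a convex combination of finitely many normalized minimal zeros τ(j), j ∈ J. Then every minimal zero τ(j₀) is an extreme point of conv(T₀). -/

import Mathlib

open Matrix BigOperators

def Copositive {p : ℕ} (X : Matrix (Fin p) (Fin p) ℝ) : Prop :=
  ∀ t : Fin p → ℝ, (∀ k, 0 ≤ t k) → 0 ≤ t ⬝ᵥ X.mulVec t

def IsZeroOf {p : ℕ} (X : Matrix (Fin p) (Fin p) ℝ) (τ : Fin p → ℝ) : Prop :=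
  (∀ k, 0 ≤ τ k) ∧ τ ≠ 0 ∧ τ ⬝ᵥ X.mulVec τ = 0

def supp {p : ℕ} (t : Fin p → ℝ) : Set (Fin p) := {k | 0 < t k}

def IsMinimalZero {p : ℕ} (X : Matrix (Fin p) (Fin p) ℝ) (τ : Fin p → ℝ) : Prop :=
  IsZeroOf X τ ∧ ∀ t : Fin p → ℝ, IsZeroOf X t → ¬ (supp t ⊂ supp τ)

/-- The set of normalized zeros of `X`. -/
def T0 {p : ℕ} (X : Matrix (Fin p) (Fin p) ℝ) : Set (Fin p → ℝ) :=
  {t | (∀ k, 0 ≤ t k) ∧ (∑ k, |t k| = 1) ∧ t ⬝ᵥ X.mulVec t = 0}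

section Aux

variable {p : ℕ} {X : Matrix (Fin p) (Fin p) ℝ}

lemma dot_swap (hX : X.IsSymm)
    (u v : Fin p → ℝ) : u ⬝ᵥ X.mulVec v = (X.mulVec u) ⬝ᵥ v := by
  rw [Matrix.dotProduct_mulVec, ← Matrix.mulVec_transpose, hX.eq]

lemma expand_q (X : Matrix (Fin p) (Fin p) ℝ) (u w : Fin p → ℝ) (ε : ℝ) :
    (u + ε • w) ⬝ᵥ X.mulVec (u + ε • w) =
      u ⬝ᵥ X.mulVec u + ε * (u ⬝ᵥ X.mulVec w + w ⬝ᵥ X.mulVec u)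
        + ε ^ 2 * (w ⬝ᵥ X.mulVec w) := by
  simp [Matrix.mulVec_add, Matrix.mulVec_smul, dotProduct_add,
    add_dotProduct, dotProduct_smul, smul_dotProduct,
    smul_eq_mul]
  ring

lemma single_expand (hX : X.IsSymm) (σ : Fin p → ℝ) (k : Fin p) (ε : ℝ) :
    (σ + ε • (Pi.single k 1 : Fin p → ℝ)) ⬝ᵥ X.mulVec (σ + ε • (Pi.single k 1 : Fin p → ℝ)) =
      σ ⬝ᵥ X.mulVec σ + ε * (2 * (X.mulVec σ) k) + ε ^ 2 * X k k := by
  rw [expand_q]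
  congr 1
  · congr 1
    have h1 : σ ⬝ᵥ X.mulVec (Pi.single k 1) = (X.mulVec σ) k := by
      rw [dot_swap hX, dotProduct_single, mul_one]
    have h2 : (Pi.single k 1 : Fin p → ℝ) ⬝ᵥ X.mulVec σ = (X.mulVec σ) k := by
      rw [single_dotProduct, one_mul]
    rw [h1, h2]; ring
  · congr 1
    have : X.mulVec (Pi.single k 1) = fun i => X i k := by
      ext i; simp [Matrix.mulVec_single]
    rw [this, single_dotProduct, one_mul]

lemma diag_nonneg (hcop : Copositive X) (k : Fin p) : 0 ≤ X k k := by
  have := hcop (Pi.single k 1) (by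
    intro j; by_cases h : j = k <;> simp [h, Pi.single_apply])
  have h : (Pi.single k 1 : Fin p → ℝ) ⬝ᵥ X.mulVec (Pi.single k 1) = X k k := by
    rw [single_dotProduct, one_mul]
    have : X.mulVec (Pi.single k 1) = fun i => X i k := by
      ext i; simp [Matrix.mulVec_single]
    rw [this]
  rwa [h] at this

lemma mulVec_nonneg (hX : X.IsSymm) (hcop : Copositive X) {σ : Fin p → ℝ}
    (hσ : ∀ k, 0 ≤ σ k) (hq : σ ⬝ᵥ X.mulVec σ = 0) (k : Fin p) :
    0 ≤ (X.mulVec σ) k := by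
  by_contra h
  push_neg at h
  set c := (X.mulVec σ) k with hc
  set d := X k k with hd
  have hdpos : 0 ≤ d := diag_nonneg hcop k
  set ε := -c / (d + 1) with hε
  have hεpos : 0 < ε := div_pos (by linarith) (by linarith)
  have hεd : ε * (d + 1) = -c := by
    rw [hε]; field_simp
  have hnn : ∀ j, 0 ≤ (σ + ε • (Pi.single k 1 : Fin p → ℝ)) j := by
    intro j
    rcases eq_or_ne j k with hj | hj
    · subst hj
      simp only [Pi.add_apply, Pi.smul_apply, Pi.single_eq_same, smul_eq_mul, mul_one]
      have := hσ j; linarith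
    · simp [Pi.single_apply, hj, hσ j]
  have hthis := hcop _ hnn
  rw [single_expand hX σ k ε, hq, zero_add] at hthis
  nlinarith [hthis, hεd, mul_pos hεpos hεpos, hεpos]

lemma mulVec_eq_zero_on_supp (hX : X.IsSymm) (hcop : Copositive X) {σ : Fin p → ℝ}
    (hσ : ∀ k, 0 ≤ σ k) (hq : σ ⬝ᵥ X.mulVec σ = 0) {k : Fin p} (hk : 0 < σ k) :
    (X.mulVec σ) k = 0 := by
  have h1 := mulVec_nonneg hX hcop hσ hq k
  by_contra h
  have hcpos : 0 < (X.mulVec σ) k := lt_of_le_of_ne h1 (Ne.symm h)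
  set c := (X.mulVec σ) k with hcdef
  set d := X k k with hd
  have hdpos : 0 ≤ d := diag_nonneg hcop k
  set ε := min (σ k) (c / (d + 1)) with hε
  have hεpos : 0 < ε := lt_min hk (div_pos hcpos (by linarith))
  have hεle : ε ≤ σ k := min_le_left _ _
  have hεle2 : ε ≤ c / (d + 1) := min_le_right _ _
  have hεc : ε * (d + 1) ≤ c := by
    rw [← le_div_iff₀ (by linarith : (0:ℝ) < d + 1)]; exact hεle2
  have hnn : ∀ j, 0 ≤ (σ + (-ε) • (Pi.single k 1 : Fin p → ℝ)) j := by
    intro j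
    rcases eq_or_ne j k with hj | hj
    · subst hj
      simp only [Pi.add_apply, Pi.smul_apply, Pi.single_eq_same, smul_eq_mul, mul_one]
      linarith
    · simp [Pi.single_apply, hj, hσ j]
  have hthis := hcop _ hnn
  rw [single_expand hX σ k (-ε), hq, zero_add] at hthis
  nlinarith [hthis, hεc, hεpos, hcpos, hdpos, mul_pos hεpos hcpos]


lemma minimal_unique (hX : X.IsSymm) (hcop : Copositive X) {σ τ : Fin p → ℝ}
    (hσ : IsMinimalZero X σ) (hτ : IsMinimalZero X τ)
    (hσ1 : ∑ k, σ k = 1) (hτ1 : ∑ k, τ k = 1)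
    (hs : supp σ = supp τ) : σ = τ := by
  by_contra hne
  obtain ⟨⟨hσnn, hσne, hσq⟩, hσmin⟩ := hσ
  obtain ⟨⟨hτnn, hτne, hτq⟩, hτmin⟩ := hτ
  -- cross terms vanish
  have hXσ : ∀ k, 0 < σ k → (X.mulVec σ) k = 0 := fun k hk =>
    mulVec_eq_zero_on_supp hX hcop hσnn hσq hk
  have hστ : σ ⬝ᵥ X.mulVec τ = 0 := by
    rw [dot_swap hX]
    apply Finset.sum_eq_zero
    intro k _
    rcases eq_or_lt_of_le (hτnn k) with h | h
    · simp [← h]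
    · have hk : k ∈ supp τ := h
      rw [← hs] at hk
      simp [hXσ k hk]
  have hτσ : τ ⬝ᵥ X.mulVec σ = 0 := by
    rw [dotProduct_comm, ← dot_swap hX]
    exact hστ
  set δ : Fin p → ℝ := σ - τ with hδ
  have hδne : δ ≠ 0 := sub_ne_zero_of_ne hne
  have hδsum : ∑ k, δ k = 0 := by
    simp [hδ, Finset.sum_sub_distrib, hσ1, hτ1]
  -- δ has a negative entry
  have hneg : ∃ k, δ k < 0 := by
    by_contra hpos
    push_neg at hpos
    have : ∀ k ∈ Finset.univ, δ k = 0 :=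
      (Finset.sum_eq_zero_iff_of_nonneg (fun k _ => hpos k)).mp hδsum
    exact hδne (funext fun k => this k (Finset.mem_univ k))
  -- quadratic terms in δ
  have hq1 : τ ⬝ᵥ X.mulVec δ = 0 := by
    simp [hδ, Matrix.mulVec_sub, dotProduct_sub, hτσ, hτq]
  have hq2 : δ ⬝ᵥ X.mulVec τ = 0 := by
    simp [hδ, sub_dotProduct, hστ, hτq]
  have hq3 : δ ⬝ᵥ X.mulVec δ = 0 := by
    simp [hδ, Matrix.mulVec_sub, dotProduct_sub, sub_dotProduct,
      hσq, hτq, hστ, hτσ]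
  -- minimal ε
  set s : Finset (Fin p) := Finset.univ.filter (fun k => δ k < 0) with hsdef
  have hsne : s.Nonempty := by
    obtain ⟨k, hk⟩ := hneg
    exact ⟨k, by simp [hsdef, hk]⟩
  set ε : ℝ := s.inf' hsne (fun k => τ k / (-δ k)) with hε
  have hτpos : ∀ k ∈ s, 0 < τ k := by
    intro k hk
    rw [hsdef, Finset.mem_filter] at hk
    have : σ k < τ k := by have := hk.2; simp [hδ] at this; linarith
    linarith [hσnn k]
  have hεpos : 0 < ε := by
    rw [hε, Finset.lt_inf'_iff]
    intro k hk
    have hδk : δ k < 0 := by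
      rw [hsdef, Finset.mem_filter] at hk; exact hk.2
    exact div_pos (hτpos k hk) (by linarith)
  obtain ⟨k₀, hk₀s, hk₀⟩ := Finset.exists_mem_eq_inf' hsne (fun k => τ k / (-δ k))
  have hδk₀ : δ k₀ < 0 := by
    rw [hsdef, Finset.mem_filter] at hk₀s; exact hk₀s.2
  set t : Fin p → ℝ := τ + ε • δ with ht
  have htnn : ∀ k, 0 ≤ t k := by
    intro k
    rcases lt_or_ge (δ k) 0 with h | h
    · have hks : k ∈ s := by simp [hsdef, h]
      have : ε ≤ τ k / (-δ k) := by
        rw [hε]; exact Finset.inf'_le _ hks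
      have h2 : ε * (-δ k) ≤ τ k := by
        rw [← le_div_iff₀ (by linarith : (0:ℝ) < -δ k)]; exact this
      simp only [ht, Pi.add_apply, Pi.smul_apply, smul_eq_mul]
      nlinarith
    · simp only [ht, Pi.add_apply, Pi.smul_apply, smul_eq_mul]
      nlinarith [hτnn k, hεpos]
  have htsum : ∑ k, t k = 1 := by
    simp [ht, Finset.sum_add_distrib, ← Finset.mul_sum, hτ1, hδsum]
  have htne : t ≠ 0 := by
    intro h
    rw [h] at htsum
    simp at htsum
  have htq : t ⬝ᵥ X.mulVec t = 0 := by
    rw [ht, expand_q, hτq, hq1, hq3, hq2]; ring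
  have htzero : IsZeroOf X t := ⟨htnn, htne, htq⟩
  -- supp t ⊂ supp τ
  have hsub : supp t ⊆ supp τ := by
    intro k hk
    by_contra hkτ
    have hτk : τ k = 0 := by
      have := hτnn k
      by_contra h'
      exact hkτ (lt_of_le_of_ne this (Ne.symm h'))
    have hσk : σ k = 0 := by
      have hknotσ : k ∉ supp σ := by rw [hs]; exact hkτ
      have := hσnn k
      by_contra h'
      exact hknotσ (lt_of_le_of_ne this (Ne.symm h'))
    have : t k = 0 := by
      simp [ht, hτk, hδ, hσk]
    exact absurd this (ne_of_gt hk)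
  have hk₀τ : k₀ ∈ supp τ := hτpos k₀ hk₀s
  have hεval : ε = τ k₀ / -δ k₀ := hk₀
  have hk₀t : k₀ ∉ supp t := by
    have h0 : t k₀ = 0 := by
      simp only [ht, Pi.add_apply, Pi.smul_apply, smul_eq_mul]
      rw [hεval]
      have hne0 : δ k₀ ≠ 0 := ne_of_lt hδk₀
      field_simp
      ring
    simp [supp, h0]
  exact hτmin t htzero ((Set.ssubset_iff_of_subset hsub).mpr ⟨k₀, hk₀τ, hk₀t⟩)

end Aux

theorem minimal_zeros_are_extreme_points {p : ℕ} {ι : Type*} [Fintype ι]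
    (X : Matrix (Fin p) (Fin p) ℝ) (hX : X.IsSymm) (hcop : Copositive X)
    (hT0 : (T0 X).Nonempty)
    (τ : ι → Fin p → ℝ)
    (hτ : ∀ j, IsMinimalZero X (τ j) ∧ τ j ∈ T0 X)
    (hdecomp : ∀ t ∈ T0 X, ∃ α : ι → ℝ,
      (∀ j, 0 ≤ α j) ∧ (∑ j, α j = 1) ∧ t = ∑ j, α j • τ j) :
    ∀ j₀ : ι, τ j₀ ∈ Set.extremePoints ℝ (convexHull ℝ (T0 X)) := by
  intro j₀
  -- sums of τ j are 1
  have hτsum : ∀ j, ∑ k, τ j k = 1 := by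
    intro j
    have h := (hτ j).2.2.1
    calc ∑ k, τ j k = ∑ k, |τ j k| :=
          Finset.sum_congr rfl (fun k _ => (abs_of_nonneg ((hτ j).2.1 k)).symm)
      _ = 1 := h
  -- every point of conv T0 is a convex combination of the τ j
  set S : Set (Fin p → ℝ) :=
    {x | ∃ c : ι → ℝ, (∀ j, 0 ≤ c j) ∧ (∑ j, c j = 1) ∧ x = ∑ j, c j • τ j} with hS
  have hSconv : Convex ℝ S := by
    rintro x ⟨c, hc, hc1, hcx⟩ y ⟨c', hc', hc'1, hcy⟩ a b ha hb hab
    refine ⟨fun j => a * c j + b * c' j, fun j => add_nonneg (mul_nonneg ha (hc j)) (mul_nonneg hb (hc' j)), ?_, ?_⟩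
    · rw [Finset.sum_add_distrib, ← Finset.mul_sum, ← Finset.mul_sum, hc1, hc'1]
      simpa using hab
    · rw [hcx, hcy, Finset.smul_sum, Finset.smul_sum, ← Finset.sum_add_distrib]
      exact Finset.sum_congr rfl fun j _ => by
        rw [smul_smul, smul_smul, ← add_smul]
  have hT0S : T0 X ⊆ S := by
    intro t ht
    obtain ⟨α, hα, hα1, hαt⟩ := hdecomp t ht
    exact ⟨α, hα, hα1, hαt⟩
  have hconvS : convexHull ℝ (T0 X) ⊆ S := convexHull_min hT0S hSconv
  constructor
  · exact subset_convexHull ℝ _ (hτ j₀).2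
  · rintro x hx y hy ⟨a, b, ha, hb, hab, hxy⟩
    obtain ⟨c, hc, hc1, hcx⟩ := hconvS hx
    obtain ⟨c', hc', hc'1, hcy⟩ := hconvS hy
    set w : ι → ℝ := fun j => a * c j + b * c' j with hw
    have hwnn : ∀ j, 0 ≤ w j := fun j =>
      add_nonneg (mul_nonneg ha.le (hc j)) (mul_nonneg hb.le (hc' j))
    have hj₀w : τ j₀ = ∑ j, w j • τ j := by
      rw [← hxy, hcx, hcy, Finset.smul_sum, Finset.smul_sum, ← Finset.sum_add_distrib]
      exact Finset.sum_congr rfl fun j _ => by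
        rw [smul_smul, smul_smul, ← add_smul]
    -- coordinates
    have hcoord : ∀ k, τ j₀ k = ∑ j, w j * τ j k := by
      intro k
      conv_lhs => rw [hj₀w]
      simp [Finset.sum_apply]
    -- key: each j with positive weight equals τ j₀
    have hkey : ∀ j, 0 < w j → τ j = τ j₀ := by
      intro j hj
      -- supp τ j ⊆ supp τ j₀
      have hsubs : supp (τ j) ⊆ supp (τ j₀) := by
        intro k hk
        rcases eq_or_lt_of_le ((hτ j₀).2.1 k) with h | h
        · exfalso
          have hsum0 : ∑ j', w j' * τ j' k = 0 := by rw [← hcoord k, ← h]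
          have hterm : w j * τ j k = 0 :=
            (Finset.sum_eq_zero_iff_of_nonneg
              (fun j' _ => mul_nonneg (hwnn j') ((hτ j').2.1 k))).mp hsum0 j
              (Finset.mem_univ j)
          have : τ j k = 0 := by
            rcases mul_eq_zero.mp hterm with h' | h'
            · exact absurd h' (ne_of_gt hj)
            · exact h'
          exact absurd this (ne_of_gt hk)
        · exact h
      -- not strict, by minimality of τ j₀
      have hnot : ¬ (supp (τ j) ⊂ supp (τ j₀)) := (hτ j₀).1.2 (τ j) (hτ j).1.1
      have heq : supp (τ j) = supp (τ j₀) := by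
        by_contra hne
        exact hnot (HasSubset.Subset.ssubset_of_ne hsubs hne)
      exact minimal_unique hX hcop (hτ j).1 (hτ j₀).1 (hτsum j) (hτsum j₀) heq
    -- conclude x = τ j₀ and y = τ j₀
    have hxeq : x = τ j₀ := by
      rw [hcx]
      have : ∀ j, c j • τ j = c j • τ j₀ := by
        intro j
        rcases eq_or_lt_of_le (hc j) with h | h
        · rw [← h]; simp
        · have hwj : 0 < w j := by
            have := mul_nonneg hb.le (hc' j)
            have := mul_pos ha h
            rw [hw]; dsimp; linarith
          rw [hkey j hwj]
      rw [Finset.sum_congr rfl (fun j _ => this j), ← Finset.sum_smul, hc1, one_smul]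
    have hyeq : y = τ j₀ := by
      rw [hcy]
      have : ∀ j, c' j • τ j = c' j • τ j₀ := by
        intro j
        rcases eq_or_lt_of_le (hc' j) with h | h
        · rw [← h]; simp
        · have hwj : 0 < w j := by
            have := mul_nonneg ha.le (hc j)
            have := mul_pos hb h
            rw [hw]; dsimp; linarith
          rw [hkey j hwj]
      rw [Finset.sum_congr rfl (fun j _ => this j), ← Finset.sum_smul, hc'1, one_smul]
    exact hxeq
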